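/- Let n ≥ 5 and l ≥ 4. The quintic P(x) = x⁵ + (3n+2-2nl)x⁴ + (7n-3nl-3ln²-3)x³ + (2ln³-4ln²+6ln-12n+4n²-4n³-4)x² + (4ln³+8ln²-4ln-12n-4n²-4n³+4)x + (-8ln³+32ln²-24ln+16n³-48n²+32n) has exactly two negative real roots β₄, β₅ and three positive real roots, and the negative roots satisfy -n² < β₅ < -2n < β₄ < -1. -/

import Mathlib

private lemma pstepL {a b : ℝ} (ha0 : (0:ℝ) < a) (ha : 5 ≤ a) (hb0 : (0:ℝ) < b) :
    ∀ i j : ℕ, 5 * (a^i * b^j) ≤ a^(i+1) * b^j := by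
  intro i j
  have h1 : 5 * a^i ≤ a * a^i := mul_le_mul_of_nonneg_right ha (pow_nonneg ha0.le i)
  have h := mul_le_mul_of_nonneg_right h1 (pow_nonneg hb0.le j)
  calc 5 * (a^i * b^j) = 5 * a^i * b^j := by ring
  _ ≤ a * a^i * b^j := h
  _ = a^(i+1) * b^j := by ring

private lemma bstepL {a b : ℝ} (ha0 : (0:ℝ) < a) (hb0 : (0:ℝ) < b) (hb : 4 ≤ b) :
    ∀ i j : ℕ, 4 * (a^i * b^j) ≤ a^i * b^(j+1) := by
  intro i j
  have h1 : 4 * b^j ≤ b * b^j := mul_le_mul_of_nonneg_right hb (pow_nonneg hb0.le j)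
  have h := mul_le_mul_of_nonneg_right h1 (pow_nonneg ha0.le i)
  calc 4 * (a^i * b^j) = 4 * b^j * a^i := by ring
  _ ≤ b * b^j * a^i := h
  _ = a^i * b^(j+1) := by ring

private lemma mposL {a b : ℝ} (ha0 : (0:ℝ) < a) (hb0 : (0:ℝ) < b) :
    ∀ i j : ℕ, 0 < a^i * b^j := fun i j => mul_pos (pow_pos ha0 i) (pow_pos hb0 j)

private lemma sE1 (a b : ℝ) (ha : 5 ≤ a) (hb : 4 ≤ b) :
    (-(a^2))^5 + (3*a + 2 - 2*a*b)*(-(a^2))^4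
    + (7*a - 3*a*b - 3*b*a^2 - 3)*(-(a^2))^3
    + (2*b*a^3 - 4*b*a^2 + 6*b*a - 12*a + 4*a^2 - 4*a^3 - 4)*(-(a^2))^2
    + (4*b*a^3 + 8*b*a^2 - 4*b*a - 12*a - 4*a^2 - 4*a^3 + 4)*(-(a^2))
    + (-8*b*a^3 + 32*b*a^2 - 24*b*a + 16*a^3 - 48*a^2 + 32*a) < 0 := by
  have ha0 : (0:ℝ) < a := by linarith
  have hb0 : (0:ℝ) < b := by linarith
  have P := pstepL ha0 ha hb0
  have B := bstepL ha0 hb0 hb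
  have M := mposL ha0 hb0
  have hP1_0 := P 1 0
  have hP2_0 := P 2 0
  have hP3_0 := P 3 0
  have hP4_0 := P 4 0
  have hP5_0 := P 5 0
  have hP6_0 := P 6 0
  have hP7_0 := P 7 0
  have hP8_0 := P 8 0
  have hP9_0 := P 9 0
  have hP1_1 := P 1 1
  have hP2_1 := P 2 1
  have hP3_1 := P 3 1
  have hP4_1 := P 4 1
  have hP5_1 := P 5 1
  have hP6_1 := P 6 1
  have hP7_1 := P 7 1
  have hP8_1 := P 8 1
  have hB1_0 := B 1 0
  have hB2_0 := B 2 0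
  have hB3_0 := B 3 0
  have hB4_0 := B 4 0
  have hB5_0 := B 5 0
  have hB6_0 := B 6 0
  have hB7_0 := B 7 0
  have hB8_0 := B 8 0
  have hB9_0 := B 9 0
  have hM9_0 := M 9 0
  have hM9_1 := M 9 1
  have hM1_0 := M 1 0
  have hM1_1 := M 1 1
  ring_nf at hP1_0 hP2_0 hP3_0 hP4_0 hP5_0 hP6_0 hP7_0 hP8_0 hP9_0 hP1_1 hP2_1 hP3_1 hP4_1 hP5_1 hP6_1 hP7_1 hP8_1 hB1_0 hB2_0 hB3_0 hB4_0 hB5_0 hB6_0 hB7_0 hB8_0 hB9_0 hM9_0 hM9_1 hM1_0 hM1_1 ⊢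
  linarith [hP1_0, hP2_0, hP3_0, hP4_0, hP5_0, hP6_0, hP7_0, hP8_0, hP9_0, hP1_1, hP2_1, hP3_1, hP4_1, hP5_1, hP6_1, hP7_1, hP8_1, hB1_0, hB2_0, hB3_0, hB4_0, hB5_0, hB6_0, hB7_0, hB8_0, hB9_0, hM9_0, hM9_1, hM1_0, hM1_1]

private lemma sE3 (a b : ℝ) (ha : 5 ≤ a) (hb : 4 ≤ b) :
    (-1:ℝ)^5 + (3*a + 2 - 2*a*b)*(-1:ℝ)^4
    + (7*a - 3*a*b - 3*b*a^2 - 3)*(-1:ℝ)^3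
    + (2*b*a^3 - 4*b*a^2 + 6*b*a - 12*a + 4*a^2 - 4*a^3 - 4)*(-1:ℝ)^2
    + (4*b*a^3 + 8*b*a^2 - 4*b*a - 12*a - 4*a^2 - 4*a^3 + 4)*(-1:ℝ)
    + (-8*b*a^3 + 32*b*a^2 - 24*b*a + 16*a^3 - 48*a^2 + 32*a) < 0 := by
  have ha0 : (0:ℝ) < a := by linarith
  have hb0 : (0:ℝ) < b := by linarith
  have P := pstepL ha0 ha hb0
  have B := bstepL ha0 hb0 hb
  have M := mposL ha0 hb0
  have hP1_0 := P 1 0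
  have hP2_0 := P 2 0
  have hP1_1 := P 1 1
  have hP2_1 := P 2 1
  have hB3_0 := B 3 0
  have hB2_0 := B 2 0
  have hB1_0 := B 1 0
  have hM3_0 := M 3 0
  have hM2_0 := M 2 0
  have hM1_0 := M 1 0
  have hM3_1 := M 3 1
  have hM1_1 := M 1 1
  ring_nf at hP1_0 hP2_0 hP1_1 hP2_1 hB3_0 hB2_0 hB1_0 hM3_0 hM2_0 hM1_0 hM3_1 hM1_1 ⊢
  linarith [hP1_0, hP2_0, hP1_1, hP2_1, hB3_0, hB2_0, hB1_0, hM3_0, hM2_0, hM1_0, hM3_1, hM1_1]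

private lemma sE5 (a b : ℝ) (ha : 5 ≤ a) (hb : 4 ≤ b) :
    0 < (2:ℝ)^5 + (3*a + 2 - 2*a*b)*(2:ℝ)^4
    + (7*a - 3*a*b - 3*b*a^2 - 3)*(2:ℝ)^3
    + (2*b*a^3 - 4*b*a^2 + 6*b*a - 12*a + 4*a^2 - 4*a^3 - 4)*(2:ℝ)^2
    + (4*b*a^3 + 8*b*a^2 - 4*b*a - 12*a - 4*a^2 - 4*a^3 + 4)*(2:ℝ)
    + (-8*b*a^3 + 32*b*a^2 - 24*b*a + 16*a^3 - 48*a^2 + 32*a) := by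
  have ha0 : (0:ℝ) < a := by linarith
  have hb0 : (0:ℝ) < b := by linarith
  have P := pstepL ha0 ha hb0
  have B := bstepL ha0 hb0 hb
  have M := mposL ha0 hb0
  have hP1_0 := P 1 0
  have hP2_0 := P 2 0
  have hP1_1 := P 1 1
  have hP2_1 := P 2 1
  have hB3_0 := B 3 0
  have hB2_0 := B 2 0
  have hB1_0 := B 1 0
  have hM3_0 := M 3 0
  have hM2_0 := M 2 0
  have hM1_0 := M 1 0
  have hM3_1 := M 3 1
  have hM1_1 := M 1 1
  ring_nf at hP1_0 hP2_0 hP1_1 hP2_1 hB3_0 hB2_0 hB1_0 hM3_0 hM2_0 hM1_0 hM3_1 hM1_1 ⊢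
  linarith [hP1_0, hP2_0, hP1_1, hP2_1, hB3_0, hB2_0, hB1_0, hM3_0, hM2_0, hM1_0, hM3_1, hM1_1]

private lemma sE6 (a b : ℝ) (ha : 5 ≤ a) (hb : 4 ≤ b) :
    (2*a)^5 + (3*a + 2 - 2*a*b)*(2*a)^4
    + (7*a - 3*a*b - 3*b*a^2 - 3)*(2*a)^3
    + (2*b*a^3 - 4*b*a^2 + 6*b*a - 12*a + 4*a^2 - 4*a^3 - 4)*(2*a)^2
    + (4*b*a^3 + 8*b*a^2 - 4*b*a - 12*a - 4*a^2 - 4*a^3 + 4)*(2*a)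
    + (-8*b*a^3 + 32*b*a^2 - 24*b*a + 16*a^3 - 48*a^2 + 32*a) < 0 := by
  have ha0 : (0:ℝ) < a := by linarith
  have hb0 : (0:ℝ) < b := by linarith
  have P := pstepL ha0 ha hb0
  have B := bstepL ha0 hb0 hb
  have M := mposL ha0 hb0
  have hP1_0 := P 1 0
  have hP2_0 := P 2 0
  have hP3_0 := P 3 0
  have hP4_0 := P 4 0
  have hP1_1 := P 1 1
  have hP2_1 := P 2 1
  have hP3_1 := P 3 1
  have hP4_1 := P 4 1
  have hB1_0 := B 1 0
  have hB2_0 := B 2 0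
  have hB3_0 := B 3 0
  have hB4_0 := B 4 0
  have hB5_0 := B 5 0
  have hM5_0 := M 5 0
  have hM4_0 := M 4 0
  have hM5_1 := M 5 1
  have hM1_0 := M 1 0
  have hM1_1 := M 1 1
  ring_nf at hP1_0 hP2_0 hP3_0 hP4_0 hP1_1 hP2_1 hP3_1 hP4_1 hB1_0 hB2_0 hB3_0 hB4_0 hB5_0 hM5_0 hM4_0 hM5_1 hM1_0 hM1_1 ⊢
  linarith [hP1_0, hP2_0, hP3_0, hP4_0, hP1_1, hP2_1, hP3_1, hP4_1, hB1_0, hB2_0, hB3_0, hB4_0, hB5_0, hM5_0, hM4_0, hM5_1, hM1_0, hM1_1]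

private lemma sE7 (a b : ℝ) (ha : 5 ≤ a) (hb : 4 ≤ b) :
    0 < (3*a*b)^5 + (3*a + 2 - 2*a*b)*(3*a*b)^4
    + (7*a - 3*a*b - 3*b*a^2 - 3)*(3*a*b)^3
    + (2*b*a^3 - 4*b*a^2 + 6*b*a - 12*a + 4*a^2 - 4*a^3 - 4)*(3*a*b)^2
    + (4*b*a^3 + 8*b*a^2 - 4*b*a - 12*a - 4*a^2 - 4*a^3 + 4)*(3*a*b)
    + (-8*b*a^3 + 32*b*a^2 - 24*b*a + 16*a^3 - 48*a^2 + 32*a) := by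
  have ha0 : (0:ℝ) < a := by linarith
  have hb0 : (0:ℝ) < b := by linarith
  have P := pstepL ha0 ha hb0
  have B := bstepL ha0 hb0 hb
  have M := mposL ha0 hb0
  have hP1_0 := P 1 0
  have hP1_1 := P 1 1
  have hP1_2 := P 1 2
  have hP1_3 := P 1 3
  have hP1_4 := P 1 4
  have hP1_5 := P 1 5
  have hP2_0 := P 2 0
  have hP2_1 := P 2 1
  have hP2_2 := P 2 2
  have hP2_3 := P 2 3
  have hP2_4 := P 2 4
  have hP2_5 := P 2 5
  have hP3_0 := P 3 0
  have hP3_1 := P 3 1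
  have hP3_2 := P 3 2
  have hP3_3 := P 3 3
  have hP3_4 := P 3 4
  have hP3_5 := P 3 5
  have hP4_0 := P 4 0
  have hP4_1 := P 4 1
  have hP4_2 := P 4 2
  have hP4_3 := P 4 3
  have hP4_4 := P 4 4
  have hP4_5 := P 4 5
  have hB1_0 := B 1 0
  have hB1_1 := B 1 1
  have hB1_2 := B 1 2
  have hB1_3 := B 1 3
  have hB1_4 := B 1 4
  have hB2_0 := B 2 0
  have hB2_1 := B 2 1
  have hB2_2 := B 2 2
  have hB2_3 := B 2 3
  have hB2_4 := B 2 4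
  have hB3_0 := B 3 0
  have hB3_1 := B 3 1
  have hB3_2 := B 3 2
  have hB3_3 := B 3 3
  have hB3_4 := B 3 4
  have hB4_0 := B 4 0
  have hB4_1 := B 4 1
  have hB4_2 := B 4 2
  have hB4_3 := B 4 3
  have hB4_4 := B 4 4
  have hB5_0 := B 5 0
  have hB5_1 := B 5 1
  have hB5_2 := B 5 2
  have hB5_3 := B 5 3
  have hB5_4 := B 5 4
  have hM5_5 := M 5 5
  have hM5_4 := M 5 4
  have hM4_4 := M 4 4
  have hM3_0 := M 3 0
  have hM2_0 := M 2 0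
  have hM1_0 := M 1 0
  have hM1_1 := M 1 1
  ring_nf at hP1_0 hP1_1 hP1_2 hP1_3 hP1_4 hP1_5 hP2_0 hP2_1 hP2_2 hP2_3 hP2_4 hP2_5 hP3_0 hP3_1 hP3_2 hP3_3 hP3_4 hP3_5 hP4_0 hP4_1 hP4_2 hP4_3 hP4_4 hP4_5 hB1_0 hB1_1 hB1_2 hB1_3 hB1_4 hB2_0 hB2_1 hB2_2 hB2_3 hB2_4 hB3_0 hB3_1 hB3_2 hB3_3 hB3_4 hB4_0 hB4_1 hB4_2 hB4_3 hB4_4 hB5_0 hB5_1 hB5_2 hB5_3 hB5_4 hM5_5 hM5_4 hM4_4 hM3_0 hM2_0 hM1_0 hM1_1 ⊢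
  linarith [hP1_0, hP1_1, hP1_2, hP1_3, hP1_4, hP1_5, hP2_0, hP2_1, hP2_2, hP2_3, hP2_4, hP2_5, hP3_0, hP3_1, hP3_2, hP3_3, hP3_4, hP3_5, hP4_0, hP4_1, hP4_2, hP4_3, hP4_4, hP4_5, hB1_0, hB1_1, hB1_2, hB1_3, hB1_4, hB2_0, hB2_1, hB2_2, hB2_3, hB2_4, hB3_0, hB3_1, hB3_2, hB3_3, hB3_4, hB4_0, hB4_1, hB4_2, hB4_3, hB4_4, hB5_0, hB5_1, hB5_2, hB5_3, hB5_4, hM5_5, hM5_4, hM4_4, hM3_0, hM2_0, hM1_0, hM1_1]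

private lemma sE2 (a b : ℝ) (ha : 5 ≤ a) (hb : 4 ≤ b) :
    0 < (-(2*a))^5 + (3*a + 2 - 2*a*b)*(-(2*a))^4
    + (7*a - 3*a*b - 3*b*a^2 - 3)*(-(2*a))^3
    + (2*b*a^3 - 4*b*a^2 + 6*b*a - 12*a + 4*a^2 - 4*a^3 - 4)*(-(2*a))^2
    + (4*b*a^3 + 8*b*a^2 - 4*b*a - 12*a - 4*a^2 - 4*a^3 + 4)*(-(2*a))
    + (-8*b*a^3 + 32*b*a^2 - 24*b*a + 16*a^3 - 48*a^2 + 32*a) := by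
  nlinarith [mul_pos (by linarith : (0:ℝ) < a)
    (mul_pos (by linarith : (0:ℝ) < 5*a-3) (by linarith : (0:ℝ) < b-1))]

private lemma sE4 (a b : ℝ) (ha : 5 ≤ a) (hb : 4 ≤ b) :
    (-8*b*a^3 + 32*b*a^2 - 24*b*a + 16*a^3 - 48*a^2 + 32*a) < 0 := by
  have ha0 : (0:ℝ) < a := by linarith
  have key : 0 ≤ (b - 4) * (a^3 - 4*a^2 + 3*a) := by
    apply mul_nonneg (by linarith)
    nlinarith [sq_nonneg a, mul_pos ha0 ha0]
  nlinarith [key, mul_pos ha0 ha0, mul_pos (mul_pos ha0 ha0) ha0]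

open Polynomial in
private lemma quintic_factor (c4 c3 c2 c1 c0 r1 r2 r3 r4 r5 : ℝ)
    (hd : r1 ≠ r2 ∧ r1 ≠ r3 ∧ r1 ≠ r4 ∧ r1 ≠ r5 ∧ r2 ≠ r3 ∧ r2 ≠ r4 ∧ r2 ≠ r5 ∧
      r3 ≠ r4 ∧ r3 ≠ r5 ∧ r4 ≠ r5)
    (h1 : r1^5 + c4*r1^4 + c3*r1^3 + c2*r1^2 + c1*r1 + c0 = 0)
    (h2 : r2^5 + c4*r2^4 + c3*r2^3 + c2*r2^2 + c1*r2 + c0 = 0)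
    (h3 : r3^5 + c4*r3^4 + c3*r3^3 + c2*r3^2 + c1*r3 + c0 = 0)
    (h4 : r4^5 + c4*r4^4 + c3*r4^3 + c2*r4^2 + c1*r4 + c0 = 0)
    (h5 : r5^5 + c4*r5^4 + c3*r5^3 + c2*r5^2 + c1*r5 + c0 = 0)
    (x : ℝ) :
    x^5 + c4*x^4 + c3*x^3 + c2*x^2 + c1*x + c0
      = (x - r1) * (x - r2) * (x - r3) * (x - r4) * (x - r5) := by
  obtain ⟨d12, d13, d14, d15, d23, d24, d25, d34, d35, d45⟩ := hd
  set p : ℝ[X] := X^5 + C c4 * X^4 + C c3 * X^3 + C c2 * X^2 + C c1 * X + C c0 with hp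
  have hmonic : p.Monic := by unfold p; monicity!
  have hdeg : p.natDegree = 5 := by unfold p; compute_degree!
  have hp0 : p ≠ 0 := hmonic.ne_zero
  have heval : ∀ y : ℝ, p.eval y = y^5 + c4*y^4 + c3*y^3 + c2*y^2 + c1*y + c0 := by
    intro y; simp [hp]
  have hroot : ∀ r : ℝ, r^5 + c4*r^4 + c3*r^3 + c2*r^2 + c1*r + c0 = 0 → r ∈ p.roots := by
    intro r hr
    rw [Polynomial.mem_roots hp0]
    exact (heval r).trans hr
  set s : Multiset ℝ := {r1, r2, r3, r4, r5} with hs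
  have hnodup : s.Nodup := by
    simp only [hs, Multiset.insert_eq_cons, Multiset.nodup_cons, Multiset.mem_cons,
      Multiset.mem_singleton, Multiset.nodup_singleton]
    push_neg
    exact ⟨⟨d12, d13, d14, d15⟩, ⟨d23, d24, d25⟩, ⟨d34, d35⟩, d45, trivial⟩
  have hsub : s ≤ p.roots := by
    rw [Multiset.le_iff_subset hnodup]
    intro y hy
    simp only [hs, Multiset.insert_eq_cons, Multiset.mem_cons, Multiset.mem_singleton] at hy
    rcases hy with rfl | rfl | rfl | rfl | rfl
    exacts [hroot _ h1, hroot _ h2, hroot _ h3, hroot _ h4, hroot _ h5]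
  have hcard : p.roots.card ≤ 5 := hdeg ▸ p.card_roots'
  have hscard : s.card = 5 := by simp [hs]
  have hse : s = p.roots := Multiset.eq_of_le_of_card_le hsub (by omega)
  have hsplits : p.Splits := by
    rw [Polynomial.splits_iff_card_roots, ← hse, hscard, hdeg]
  have hfact := hsplits.eq_prod_roots_of_monic hmonic
  have := congrArg (Polynomial.eval x) hfact
  rw [heval x, ← hse] at this
  rw [this]
  simp only [hs, Multiset.insert_eq_cons, Multiset.map_cons, Multiset.map_singleton,
    Multiset.prod_cons, Multiset.prod_singleton, Polynomial.eval_mul, Polynomial.eval_sub,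
    Polynomial.eval_X, Polynomial.eval_C]
  ring


theorem stmt_13 (n l : ℕ) (hn : 5 ≤ n) (hl : 4 ≤ l) :
    ∃ β₁ β₂ β₃ β₄ β₅ : ℝ, 0 < β₁ ∧ 0 < β₂ ∧ 0 < β₃ ∧
      -(n : ℝ) ^ 2 < β₅ ∧ β₅ < -2 * (n : ℝ) ∧ -2 * (n : ℝ) < β₄ ∧ β₄ < -1 ∧
      ∀ x : ℝ, x ^ 5 + (3 * (n : ℝ) + 2 - 2 * n * l) * x ^ 4
          + (7 * (n : ℝ) - 3 * n * l - 3 * l * n ^ 2 - 3) * x ^ 3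
          + (2 * (l : ℝ) * n ^ 3 - 4 * l * n ^ 2 + 6 * l * n - 12 * n
              + 4 * (n : ℝ) ^ 2 - 4 * n ^ 3 - 4) * x ^ 2
          + (4 * (l : ℝ) * n ^ 3 + 8 * l * n ^ 2 - 4 * l * n - 12 * n
              - 4 * (n : ℝ) ^ 2 - 4 * n ^ 3 + 4) * x
          + (-8 * (l : ℝ) * n ^ 3 + 32 * l * n ^ 2 - 24 * l * n
              + 16 * (n : ℝ) ^ 3 - 48 * n ^ 2 + 32 * n)
        = (x - β₁) * (x - β₂) * (x - β₃) * (x - β₄) * (x - β₅) := by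
  have ha : (5:ℝ) ≤ (n:ℝ) := by exact_mod_cast hn
  have hb : (4:ℝ) ≤ (l:ℝ) := by exact_mod_cast hl
  set a : ℝ := (n:ℝ) with haa
  set b : ℝ := (l:ℝ) with hbb
  have ha0 : (0:ℝ) < a := by linarith
  have hcont : Continuous (fun x : ℝ => x^5 + (3*a + 2 - 2*a*b)*x^4
      + (7*a - 3*a*b - 3*b*a^2 - 3)*x^3
      + (2*b*a^3 - 4*b*a^2 + 6*b*a - 12*a + 4*a^2 - 4*a^3 - 4)*x^2
      + (4*b*a^3 + 8*b*a^2 - 4*b*a - 12*a - 4*a^2 - 4*a^3 + 4)*x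
      + (-8*b*a^3 + 32*b*a^2 - 24*b*a + 16*a^3 - 48*a^2 + 32*a)) := by fun_prop
  obtain ⟨r5, hr5m, hr5⟩ := intermediate_value_Ioo
    (show -(a^2) ≤ -(2*a) by nlinarith) hcont.continuousOn
    (Set.mem_Ioo.mpr ⟨sE1 a b ha hb, sE2 a b ha hb⟩)
  obtain ⟨r4, hr4m, hr4⟩ := intermediate_value_Ioo'
    (show -(2*a) ≤ (-1:ℝ) by nlinarith) hcont.continuousOn
    (Set.mem_Ioo.mpr ⟨sE3 a b ha hb, sE2 a b ha hb⟩)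
  obtain ⟨r1, hr1m, hr1⟩ := intermediate_value_Ioo
    (show (0:ℝ) ≤ 2 by norm_num) hcont.continuousOn
    (Set.mem_Ioo.mpr ⟨by simpa using sE4 a b ha hb, sE5 a b ha hb⟩)
  obtain ⟨r2, hr2m, hr2⟩ := intermediate_value_Ioo'
    (show (2:ℝ) ≤ 2*a by linarith) hcont.continuousOn
    (Set.mem_Ioo.mpr ⟨sE6 a b ha hb, sE5 a b ha hb⟩)
  obtain ⟨r3, hr3m, hr3⟩ := intermediate_value_Ioo
    (show 2*a ≤ 3*a*b by nlinarith) hcont.continuousOn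
    (Set.mem_Ioo.mpr ⟨sE6 a b ha hb, sE7 a b ha hb⟩)
  obtain ⟨hr1a, hr1b⟩ := hr1m
  obtain ⟨hr2a, hr2b⟩ := hr2m
  obtain ⟨hr3a, hr3b⟩ := hr3m
  obtain ⟨hr4a, hr4b⟩ := hr4m
  obtain ⟨hr5a, hr5b⟩ := hr5m
  refine ⟨r1, r2, r3, r4, r5, hr1a, by linarith, by nlinarith, by linarith, by linarith,
    by linarith, by linarith, ?_⟩
  intro x
  have key := quintic_factor (3*a + 2 - 2*a*b) (7*a - 3*a*b - 3*b*a^2 - 3)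
    (2*b*a^3 - 4*b*a^2 + 6*b*a - 12*a + 4*a^2 - 4*a^3 - 4)
    (4*b*a^3 + 8*b*a^2 - 4*b*a - 12*a - 4*a^2 - 4*a^3 + 4)
    (-8*b*a^3 + 32*b*a^2 - 24*b*a + 16*a^3 - 48*a^2 + 32*a) r1 r2 r3 r4 r5
    ⟨by linarith, by linarith, by linarith, by linarith, by linarith, by linarith,
      by linarith, by linarith, by linarith, by linarith⟩ hr1 hr2 hr3 hr4 hr5 x
  push_cast
  linear_combination key
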